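/- Let d ≥ 1, K_1 > 0, K_4 > 0, B ≥ 0, δ ∈ (0, 1/2), κ > 0 and γ ∈ (0, 2κ − δ) (in particular 2κ > δ). Let G : ℝ^d × S^d → ℝ satisfy degenerate ellipticity (Γ ≥ Γ′ implies G(p,Γ) ≤ G(p,Γ′)) and the growth bound |G(p,Γ)| ≤ K_1(1 + B + |p| + ‖Γ‖), and let ψ : ℝ^d → ℝ satisfy sup_{y ∈ ℝ^d} |ψ(y)| ≤ B. Then there exist C > 0 and h_4 ∈ (0,1], depending only on d, K_1, K_4, δ, γ, κ, such that for all h ∈ (0, h_4] and all x ∈ ℝ^d, Q := sup_{(p,Γ) ∈ D_{h,δ}} inf_{w ∈ X_{h,κ}} [ ψ(x + √h w) − √h wᵀp − (h/2) wᵀΓw − h G(p,Γ) ] satisfies Q ≤ (1 + K_1 h) B + C h. -/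

import Mathlib

noncomputable section

/-- Euclidean space `ℝ^d`. -/
abbrev Ed (d : ℕ) := EuclideanSpace ℝ (Fin d)

/-- The `ℓ²`-operator norm of a matrix. -/
def opN {d : ℕ} (Γ : Matrix (Fin d) (Fin d) ℝ) : ℝ :=
  ‖Matrix.toEuclideanCLM (𝕜 := ℝ) Γ‖

/-- Euclidean inner product `pᵀ w`. -/
def dotp {d : ℕ} (p w : Ed d) : ℝ := ∑ i, p i * w i

/-- Quadratic form `wᵀ Γ w`. -/
def quadForm {d : ℕ} (Γ : Matrix (Fin d) (Fin d) ℝ) (w : Ed d) : ℝ :=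
  ∑ i, ∑ j, w i * Γ i j * w j

/-- The Hessian matrix `D²φ(x)`. -/
def hess {d : ℕ} (φ : Ed d → ℝ) (x : Ed d) : Matrix (Fin d) (Fin d) ℝ :=
  Matrix.of fun i j =>
    iteratedFDeriv ℝ 2 φ x ![EuclideanSpace.single i 1, EuclideanSpace.single j 1]

/-- First-order partial derivative in direction `i`. -/
def pDeriv {d : ℕ} (i : Fin d) (φ : Ed d → ℝ) : Ed d → ℝ :=
  fun x => fderiv ℝ φ x (EuclideanSpace.single i 1)

/-- The multiindex partial derivative `D^α φ`. -/
def mDeriv {d : ℕ} (α : Fin d → ℕ) (φ : Ed d → ℝ) : Ed d → ℝ :=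
  (((List.finRange d).flatMap fun i => List.replicate (α i) i).foldr pDeriv φ)

/-- The finite set of multiindices `α` with `|α|₁ ≤ k`. -/
def multiIdx (d k : ℕ) : Finset (Fin d → ℕ) :=
  (Fintype.piFinset fun _ : Fin d => Finset.range (k + 1)).filter fun α => ∑ i, α i ≤ k

/-- `D_{h,δ} = {(p,Γ) ∈ ℝ^d × S^d : |p| ≤ K₄ h^{-δ}, ‖Γ‖ ≤ K₄ h^{-δ}}`. -/
def Dset (d : ℕ) (K4 h δ : ℝ) : Set (Ed d × Matrix (Fin d) (Fin d) ℝ) :=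
  {pΓ | pΓ.2.IsSymm ∧ ‖pΓ.1‖ ≤ K4 * h ^ (-δ) ∧ opN pΓ.2 ≤ K4 * h ^ (-δ)}

/-- `X_{h,κ} = {w ∈ ℝ^d : |w| ≤ h^{-κ}}`. -/
def Xset (d : ℕ) (h κ : ℝ) : Set (Ed d) := {w | ‖w‖ ≤ h ^ (-κ)}

end

open scoped RealInnerProductSpace

section Aux

lemma dotp_eq_inner {d : ℕ} (p w : Ed d) : dotp p w = ⟪p, w⟫ := by
  simp [dotp, PiLp.inner_apply, RCLike.inner_apply, mul_comm]

lemma quad_eq_inner {d : ℕ} (Γ : Matrix (Fin d) (Fin d) ℝ) (w : Ed d) :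
    quadForm Γ w = ⟪w, Matrix.toEuclideanCLM (𝕜 := ℝ) Γ w⟫ := by
  have key : ∀ i, (Matrix.toEuclideanCLM (𝕜 := ℝ) Γ w) i = ∑ j, Γ i j * w j := fun i => rfl
  simp only [quadForm, PiLp.inner_apply, RCLike.inner_apply, conj_trivial]
  refine Finset.sum_congr rfl fun i _ => ?_
  rw [key i, Finset.sum_mul]
  refine Finset.sum_congr rfl fun j _ => by ring

lemma abs_dotp_le {d : ℕ} (p w : Ed d) : |dotp p w| ≤ ‖p‖ * ‖w‖ := by
  rw [dotp_eq_inner]; exact abs_real_inner_le_norm p w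

lemma abs_quad_le {d : ℕ} (Γ : Matrix (Fin d) (Fin d) ℝ) (w : Ed d) :
    |quadForm Γ w| ≤ opN Γ * ‖w‖ ^ 2 := by
  rw [quad_eq_inner]
  calc |⟪w, Matrix.toEuclideanCLM (𝕜 := ℝ) Γ w⟫| ≤ ‖w‖ * ‖Matrix.toEuclideanCLM (𝕜 := ℝ) Γ w‖ :=
        abs_real_inner_le_norm _ _
    _ ≤ ‖w‖ * (opN Γ * ‖w‖) := by
        gcongr; exact (Matrix.toEuclideanCLM (𝕜 := ℝ) Γ).le_opNorm w
    _ = opN Γ * ‖w‖ ^ 2 := by ring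

lemma quad_smul {d : ℕ} (Γ : Matrix (Fin d) (Fin d) ℝ) (c : ℝ) (w : Ed d) :
    quadForm Γ (c • w) = c ^ 2 * quadForm Γ w := by
  simp only [quadForm, PiLp.smul_apply, smul_eq_mul, Finset.mul_sum]
  refine Finset.sum_congr rfl fun i _ => Finset.sum_congr rfl fun j _ => by ring

lemma dotp_smul {d : ℕ} (c : ℝ) (w p : Ed d) : dotp (c • w) p = c * dotp w p := by
  simp only [dotp, PiLp.smul_apply, smul_eq_mul, Finset.mul_sum]
  exact Finset.sum_congr rfl fun i _ => by ring

lemma dotp_self {d : ℕ} (p : Ed d) : dotp p p = ‖p‖ ^ 2 := by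
  rw [dotp_eq_inner, real_inner_self_eq_norm_sq]

lemma quad_zero' {d : ℕ} (Γ : Matrix (Fin d) (Fin d) ℝ) : quadForm Γ (0 : Ed d) = 0 := by
  simp [quadForm]

lemma dotp_zero' {d : ℕ} (p : Ed d) : dotp (0 : Ed d) p = 0 := by simp [dotp]

lemma exists_max_sphere {d : ℕ} (hd : 1 ≤ d) (Γ : Matrix (Fin d) (Fin d) ℝ) :
    ∃ v : Ed d, ‖v‖ = 1 ∧ ∀ u : Ed d, ‖u‖ = 1 → quadForm Γ u ≤ quadForm Γ v := by
  have hcomp : IsCompact (Metric.sphere (0 : Ed d) 1) := isCompact_sphere 0 1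
  have hne : (Metric.sphere (0 : Ed d) 1).Nonempty := by
    refine ⟨EuclideanSpace.single ⟨0, hd⟩ 1, ?_⟩
    simp [EuclideanSpace.norm_single]
  have hcont : Continuous fun w : Ed d => quadForm Γ w := by
    have : (fun w : Ed d => quadForm Γ w)
        = fun w : Ed d => ⟪w, Matrix.toEuclideanCLM (𝕜 := ℝ) Γ w⟫ := by
      funext w; exact quad_eq_inner Γ w
    rw [this]
    exact continuous_id.inner (Matrix.toEuclideanCLM (𝕜 := ℝ) Γ).continuous
  obtain ⟨v, hv, hmax⟩ := hcomp.exists_isMaxOn hne hcont.continuousOn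
  refine ⟨v, by simpa using hv, fun u hu => hmax (by simpa using hu)⟩

lemma opN_smul_one {d : ℕ} (M : ℝ) (hM : 0 ≤ M) :
    opN (M • (1 : Matrix (Fin d) (Fin d) ℝ)) ≤ M := by
  unfold opN
  rw [map_smul, map_one]
  calc ‖M • (1 : Ed d →L[ℝ] Ed d)‖ ≤ ‖M‖ * ‖(1 : Ed d →L[ℝ] Ed d)‖ :=
        ContinuousLinearMap.opNorm_smul_le _ _
    _ ≤ M * 1 := by
        rw [Real.norm_eq_abs, abs_of_nonneg hM]
        gcongr
        exact ContinuousLinearMap.norm_id_le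
    _ = M := by ring

lemma smul_one_isSymm {d : ℕ} (M : ℝ) : (M • (1 : Matrix (Fin d) (Fin d) ℝ)).IsSymm := by
  simp [Matrix.IsSymm, Matrix.transpose_smul]

lemma psd_lemma {d : ℕ} (Γ : Matrix (Fin d) (Fin d) ℝ) (hΓ : Γ.IsSymm) (M : ℝ)
    (hbound : ∀ x : Ed d, quadForm Γ x ≤ M * ‖x‖ ^ 2) :
    (M • (1 : Matrix (Fin d) (Fin d) ℝ) - Γ).PosSemidef := by
  rw [Matrix.posSemidef_iff_dotProduct_mulVec]
  constructor
  · show Matrix.conjTranspose (M • (1 : Matrix (Fin d) (Fin d) ℝ) - Γ)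
        = M • (1 : Matrix (Fin d) (Fin d) ℝ) - Γ
    ext i j
    simp only [Matrix.conjTranspose_apply, Matrix.sub_apply, Matrix.smul_apply,
      Matrix.one_apply, star_trivial, smul_eq_mul]
    rw [← hΓ.apply i j]
    simp [Matrix.transpose_apply, eq_comm]
  · intro x
    set xE : Ed d := (WithLp.equiv 2 (Fin d → ℝ)).symm x with hxE
    have key : dotProduct (star x)
          ((M • (1 : Matrix (Fin d) (Fin d) ℝ) - Γ).mulVec x)
        = M * dotp xE xE - quadForm Γ xE := by
      rw [Matrix.sub_mulVec, star_trivial, dotProduct_sub, Matrix.smul_mulVec,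
        Matrix.one_mulVec, dotProduct_smul]
      have e1 : M • dotProduct x x = M * dotp xE xE := by
        show M * (∑ i, x i * x i) = M * ∑ i, xE i * xE i
        rfl
      rw [e1]
      congr 1
      show ∑ i, x i * ∑ j, Γ i j * x j = _
      simp only [quadForm, Finset.mul_sum]
      refine Finset.sum_congr rfl fun i _ => Finset.sum_congr rfl fun j _ => ?_
      show x i * (Γ i j * x j) = x i * Γ i j * x j
      ring
    rw [key, dotp_self]
    have := hbound xE
    linarith

end Aux

set_option maxHeartbeats 1000000 in
/-- Upper bound for the max–min quantity `Q` (from the proof of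
Lemma 3.12): `Q ≤ (1 + K₁h)B + Ch` for all sufficiently small `h`. -/
theorem stmt11 (d : ℕ) (hd : 1 ≤ d) (K1 K4 B δ κ γ : ℝ)
    (hK1 : 0 < K1) (hK4 : 0 < K4) (hB : 0 ≤ B)
    (hδ : δ ∈ Set.Ioo (0 : ℝ) (1 / 2)) (hκ : 0 < κ)
    (hγ : γ ∈ Set.Ioo (0 : ℝ) (2 * κ - δ))
    (G : Ed d → Matrix (Fin d) (Fin d) ℝ → ℝ)
    (hell : ∀ (p : Ed d) (Γ Γ' : Matrix (Fin d) (Fin d) ℝ), Γ.IsSymm → Γ'.IsSymm →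
      (Γ - Γ').PosSemidef → G p Γ ≤ G p Γ')
    (hgrowth : ∀ (p : Ed d) (Γ : Matrix (Fin d) (Fin d) ℝ), Γ.IsSymm →
      |G p Γ| ≤ K1 * (1 + B + ‖p‖ + opN Γ))
    (ψ : Ed d → ℝ) (hψ : ∀ y : Ed d, |ψ y| ≤ B) :
    ∃ C > (0 : ℝ), ∃ h4 ∈ Set.Ioc (0 : ℝ) 1, ∀ h ∈ Set.Ioc (0 : ℝ) h4, ∀ x : Ed d,
      sSup {z | ∃ p Γ, (p, Γ) ∈ Dset d K4 h δ ∧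
        z = sInf {u | ∃ w ∈ Xset d h κ, u =
          ψ (x + Real.sqrt h • w) - Real.sqrt h * dotp w p -
            (h / 2) * quadForm Γ w - h * G p Γ}}
        ≤ (1 + K1 * h) * B + C * h := by
  obtain ⟨hδ0, hδ2⟩ := hδ
  obtain ⟨hγ0, hγ2⟩ := hγ
  set a : ℝ := min (2 * κ) (1 / 2 + κ) with ha
  have ha0 : 0 < a := lt_min (by linarith) (by linarith)
  set C : ℝ := K1 + 8 * K1 ^ 2 * K4 with hC
  have hCpos : 0 < C := by positivity
  set h4 : ℝ := min 1 ((4 * K1 + 1) ^ (-a⁻¹)) with hh4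
  have hbase : (0 : ℝ) < 4 * K1 + 1 := by linarith
  have hh4pos : 0 < h4 := lt_min one_pos (Real.rpow_pos_of_pos hbase _)
  refine ⟨C, hCpos, h4, ⟨hh4pos, min_le_left _ _⟩, ?_⟩
  rintro h ⟨hh0, hhle⟩ x
  have hh1 : h ≤ 1 := le_trans hhle (min_le_left _ _)
  -- smallness conditions
  have hha : h ^ a ≤ (4 * K1 + 1)⁻¹ := by
    calc h ^ a ≤ ((4 * K1 + 1) ^ (-a⁻¹)) ^ a :=
          Real.rpow_le_rpow hh0.le (le_trans hhle (min_le_right _ _)) ha0.le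
      _ = (4 * K1 + 1) ^ (-a⁻¹ * a) := by
          rw [← Real.rpow_mul hbase.le]
      _ = (4 * K1 + 1)⁻¹ := by
          rw [neg_mul, inv_mul_cancel₀ ha0.ne', Real.rpow_neg_one]
  have hinv : (4 * K1 + 1) * (4 * K1 + 1)⁻¹ = 1 := mul_inv_cancel₀ hbase.ne'
  have hinv0 : (0 : ℝ) ≤ (4 * K1 + 1)⁻¹ := by positivity
  have cond1 : 4 * K1 * h ^ (2 * κ) ≤ 1 := by
    have h1 : h ^ (2 * κ) ≤ h ^ a :=
      Real.rpow_le_rpow_of_exponent_ge hh0 hh1 (min_le_left _ _)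
    have h2 : 4 * K1 * h ^ (2 * κ) ≤ 4 * K1 * (4 * K1 + 1)⁻¹ :=
      mul_le_mul_of_nonneg_left (le_trans h1 hha) (by positivity)
    linarith only [h2, hinv, hinv0]
  have cond2 : 4 * K1 * h ^ ((1 : ℝ) / 2 + κ) ≤ 1 := by
    have h1 : h ^ ((1 : ℝ) / 2 + κ) ≤ h ^ a :=
      Real.rpow_le_rpow_of_exponent_ge hh0 hh1 (min_le_right _ _)
    have h2 : 4 * K1 * h ^ ((1 : ℝ) / 2 + κ) ≤ 4 * K1 * (4 * K1 + 1)⁻¹ :=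
      mul_le_mul_of_nonneg_left (le_trans h1 hha) (by positivity)
    linarith only [h2, hinv, hinv0]
  -- basic positivity facts
  have hκpos : (0 : ℝ) < h ^ (-κ) := Real.rpow_pos_of_pos hh0 _
  have hδpos : (0 : ℝ) < h ^ (-δ) := Real.rpow_pos_of_pos hh0 _
  have hsqrt0 : (0 : ℝ) ≤ Real.sqrt h := Real.sqrt_nonneg h
  have hsq : Real.sqrt h * Real.sqrt h = h := Real.mul_self_sqrt hh0.le
  -- key1 : 4K1 ≤ h^{-κ} * h^{-κ}
  have key1 : 4 * K1 ≤ h ^ (-κ) * h ^ (-κ) := by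
    have e1 : h ^ (-κ) * h ^ (-κ) * h ^ (2 * κ) = 1 := by
      rw [← Real.rpow_add hh0, ← Real.rpow_add hh0,
        show -κ + -κ + 2 * κ = 0 by ring, Real.rpow_zero]
    have h2κpos : (0 : ℝ) < h ^ (2 * κ) := Real.rpow_pos_of_pos hh0 _
    have hmm : 4 * K1 * h ^ (2 * κ) ≤ h ^ (-κ) * h ^ (-κ) * h ^ (2 * κ) := by
      rw [e1]; exact cond1
    exact le_of_mul_le_mul_right hmm h2κpos
  -- key2 : 4K1 √h ≤ h^{-κ}
  have key2 : 4 * K1 * Real.sqrt h ≤ h ^ (-κ) := by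
    have e1 : Real.sqrt h = h ^ ((1 : ℝ) / 2) := Real.sqrt_eq_rpow h
    have e2 : h ^ ((1 : ℝ) / 2) * h ^ κ = h ^ ((1 : ℝ) / 2 + κ) := by
      rw [← Real.rpow_add hh0]
    have e3 : h ^ (-κ) * h ^ κ = 1 := by
      rw [← Real.rpow_add hh0, show -κ + κ = 0 by ring, Real.rpow_zero]
    have hκp : (0 : ℝ) < h ^ κ := Real.rpow_pos_of_pos hh0 _
    have hmul : 4 * K1 * Real.sqrt h * h ^ κ ≤ h ^ (-κ) * h ^ κ := by
      rw [e3, e1]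
      calc 4 * K1 * h ^ ((1:ℝ)/2) * h ^ κ = 4 * K1 * (h ^ ((1:ℝ)/2) * h ^ κ) := by ring
        _ = 4 * K1 * h ^ ((1:ℝ)/2 + κ) := by rw [e2]
        _ ≤ 1 := cond2
    exact le_of_mul_le_mul_right hmul hκp
  -- h * h^{-δ} ≤ 1
  have h1δ : h * h ^ (-δ) ≤ 1 := by
    have : h * h ^ (-δ) = h ^ (1 - δ) := by
      rw [show (1 : ℝ) - δ = 1 + (-δ) by ring, Real.rpow_add hh0, Real.rpow_one]
    rw [this]
    exact Real.rpow_le_one hh0.le hh1 (by linarith)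
  -- expansion of the target bound
  have hexp : (1 + K1 * h) * B + C * h
      = B + K1 * h * B + K1 * h + 8 * K1 ^ 2 * K4 * h := by
    rw [hC]; ring
  have h8 : (0 : ℝ) ≤ 8 * K1 ^ 2 * K4 * h := by positivity
  -- the sup
  have hRHS0 : (0 : ℝ) ≤ (1 + K1 * h) * B + C * h := by positivity
  refine Real.sSup_le ?_ hRHS0
  rintro z ⟨p, Γ, ⟨hΓsym, hpb, hΓb⟩, rfl⟩
  -- eigen-type data
  obtain ⟨v, hv1, hvmax⟩ := exists_max_sphere hd Γ
  set lam : ℝ := quadForm Γ v with hlam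
  set M : ℝ := max lam 0 with hM
  have hM0 : 0 ≤ M := le_max_right _ _
  have hquad_le : ∀ y : Ed d, quadForm Γ y ≤ M * ‖y‖ ^ 2 := by
    intro y
    rcases eq_or_ne y 0 with rfl | hy
    · simp [quad_zero']
    · have hny : 0 < ‖y‖ := norm_pos_iff.mpr hy
      set u : Ed d := ‖y‖⁻¹ • y with hu
      have hnu : ‖u‖ = 1 := by
        rw [hu, norm_smul, norm_inv, norm_norm, inv_mul_cancel₀ hny.ne']
      have h1 : quadForm Γ u ≤ lam := hvmax u hnu
      have h2 : y = ‖y‖ • u := by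
        rw [hu, smul_smul, mul_inv_cancel₀ hny.ne', one_smul]
      calc quadForm Γ y = quadForm Γ (‖y‖ • u) := by rw [← h2]
        _ = ‖y‖ ^ 2 * quadForm Γ u := quad_smul Γ _ u
        _ ≤ ‖y‖ ^ 2 * M :=
            mul_le_mul_of_nonneg_left (le_trans h1 (le_max_left _ _)) (by positivity)
        _ = M * ‖y‖ ^ 2 := by ring
  have hpsd := psd_lemma Γ hΓsym M hquad_le
  have hGlb : -G p Γ ≤ K1 * (1 + B + ‖p‖ + M) := by
    have h1 : G p (M • (1 : Matrix (Fin d) (Fin d) ℝ)) ≤ G p Γ :=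
      hell p _ Γ (smul_one_isSymm M) hΓsym hpsd
    have h2 := hgrowth p (M • (1 : Matrix (Fin d) (Fin d) ℝ)) (smul_one_isSymm M)
    have h3 : opN (M • (1 : Matrix (Fin d) (Fin d) ℝ)) ≤ M := opN_smul_one M hM0
    have h4' : K1 * (1 + B + ‖p‖ + opN (M • (1 : Matrix (Fin d) (Fin d) ℝ)))
        ≤ K1 * (1 + B + ‖p‖ + M) :=
      mul_le_mul_of_nonneg_left (by linarith only [h3]) hK1.le
    have h5 : -G p (M • (1 : Matrix (Fin d) (Fin d) ℝ))
        ≤ |G p (M • (1 : Matrix (Fin d) (Fin d) ℝ))| := neg_le_abs _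
    linarith only [h1, h2, h4', h5]
  have hGmul : -(h * G p Γ) ≤ h * (K1 * (1 + B + ‖p‖ + M)) := by
    have := mul_le_mul_of_nonneg_left hGlb hh0.le
    linarith only [this]
  -- the inf set is bounded below
  set S : Set ℝ := {u | ∃ w ∈ Xset d h κ, u =
      ψ (x + Real.sqrt h • w) - Real.sqrt h * dotp w p -
        (h / 2) * quadForm Γ w - h * G p Γ} with hS
  have hbdd : BddBelow S := by
    refine ⟨-B - Real.sqrt h * (h ^ (-κ) * ‖p‖) - h / 2 * (opN Γ * (h ^ (-κ)) ^ 2)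
      - h * |G p Γ|, ?_⟩
    rintro u ⟨w, hwX, rfl⟩
    have hw : ‖w‖ ≤ h ^ (-κ) := hwX
    have hψ1 : -B ≤ ψ (x + Real.sqrt h • w) := (abs_le.mp (hψ _)).1
    have hd : dotp w p ≤ h ^ (-κ) * ‖p‖ :=
      le_trans (le_trans (le_abs_self _) (abs_dotp_le w p))
        (mul_le_mul_of_nonneg_right hw (norm_nonneg p))
    have d1 : Real.sqrt h * dotp w p ≤ Real.sqrt h * (h ^ (-κ) * ‖p‖) :=
      mul_le_mul_of_nonneg_left hd hsqrt0
    have hq : quadForm Γ w ≤ opN Γ * (h ^ (-κ)) ^ 2 :=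
      le_trans (le_trans (le_abs_self _) (abs_quad_le Γ w))
        (mul_le_mul_of_nonneg_left (pow_le_pow_left₀ (norm_nonneg w) hw 2) (norm_nonneg _))
    have d2 : h / 2 * quadForm Γ w ≤ h / 2 * (opN Γ * (h ^ (-κ)) ^ 2) :=
      mul_le_mul_of_nonneg_left hq (by positivity)
    have d3 : h * G p Γ ≤ h * |G p Γ| :=
      mul_le_mul_of_nonneg_left (le_abs_self _) hh0.le
    linarith only [hψ1, d1, d2, d3]
  -- pick a good w
  suffices hgood : ∃ w ∈ Xset d h κ,
      ψ (x + Real.sqrt h • w) - Real.sqrt h * dotp w p -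
        (h / 2) * quadForm Γ w - h * G p Γ ≤ (1 + K1 * h) * B + C * h by
    obtain ⟨w, hwX, hwle⟩ := hgood
    exact le_trans (csInf_le hbdd ⟨w, hwX, rfl⟩) hwle
  have hψB : ∀ y : Ed d, ψ y ≤ B := fun y => (abs_le.mp (hψ y)).2
  have hzero_mem : (0 : Ed d) ∈ Xset d h κ := by
    show ‖(0 : Ed d)‖ ≤ h ^ (-κ)
    rw [norm_zero]; exact hκpos.le
  rcases le_or_gt ‖p‖ M with hcase | hcase
  · -- case A : ‖p‖ ≤ M
    rcases hM0.lt_or_eq with hMpos | hMeq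
    · -- A1 : 0 < M, use the maximizing direction
      have hlamM : lam = M := by
        rcases le_or_gt 0 lam with h1 | h1
        · rw [hM, max_eq_left h1]
        · exfalso; rw [hM, max_eq_right h1.le] at hMpos; exact lt_irrefl _ hMpos
      set σ : ℝ := if 0 ≤ dotp v p then 1 else -1 with hσ
      have hσsq : σ ^ 2 = 1 := by
        rw [hσ]; split_ifs <;> norm_num
      set w : Ed d := (σ * h ^ (-κ)) • v with hw
      have hwnorm : ‖w‖ = h ^ (-κ) := by
        rw [hw, norm_smul, hv1, mul_one, Real.norm_eq_abs, abs_mul,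
          abs_of_nonneg hκpos.le]
        rw [hσ]; split_ifs <;> norm_num
      have hwX : w ∈ Xset d h κ := by
        show ‖w‖ ≤ h ^ (-κ); rw [hwnorm]
      have hdot : 0 ≤ dotp w p := by
        rw [hw, dotp_smul, hσ]
        split_ifs with h1
        · have := mul_nonneg hκpos.le h1
          linarith only [this]
        · have h2 : dotp v p ≤ 0 := (not_le.mp h1).le
          have := mul_nonneg hκpos.le (neg_nonneg.mpr h2)
          linarith only [this]
      have hquadw : quadForm Γ w = (h ^ (-κ)) ^ 2 * M := by
        rw [hw, quad_smul, ← hlam, hlamM, mul_pow, hσsq, one_mul]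
      refine ⟨w, hwX, ?_⟩
      have b1 : ψ (x + Real.sqrt h • w) ≤ B := hψB _
      have b2 : 0 ≤ Real.sqrt h * dotp w p := mul_nonneg hsqrt0 hdot
      have b4 : K1 * h * ‖p‖ ≤ K1 * h * M :=
        mul_le_mul_of_nonneg_left hcase (by positivity)
      have b5 : 0 ≤ h / 2 * M * (h ^ (-κ) * h ^ (-κ) - 4 * K1) :=
        mul_nonneg (mul_nonneg (by positivity) hM0) (sub_nonneg.mpr key1)
      rw [hquadw]
      linarith only [b1, b2, b4, b5, hGmul, hexp, h8]
    · -- A0 : M = 0, hence p = 0; take w = 0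
      have hp0 : ‖p‖ = 0 := le_antisymm (hMeq ▸ hcase) (norm_nonneg p)
      refine ⟨0, hzero_mem, ?_⟩
      have b1 : ψ (x + Real.sqrt h • (0 : Ed d)) ≤ B := hψB _
      have b3 := hGmul
      rw [hp0, ← hMeq] at b3
      rw [dotp_zero', quad_zero']
      linarith only [b1, b3, hexp, h8]
  · -- case B/C : M < ‖p‖
    have hp0 : 0 < ‖p‖ := lt_of_le_of_lt hM0 hcase
    have b4 : K1 * h * M ≤ K1 * h * ‖p‖ :=
      mul_le_mul_of_nonneg_left hcase.le (by positivity)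
    rcases le_or_gt (4 * K1 * K4 * (h * h ^ (-δ))) ‖p‖ with hbig | hsmall
    · -- case B : ‖p‖ is large; take w along p
      set c : ℝ := 4 * K1 * Real.sqrt h / ‖p‖ with hc
      have hc0 : 0 ≤ c := by positivity
      set w : Ed d := c • p with hw
      have hwnorm : ‖w‖ = 4 * K1 * Real.sqrt h := by
        rw [hw, norm_smul, Real.norm_eq_abs, abs_of_nonneg hc0, hc]
        field_simp
      have hwX : w ∈ Xset d h κ := by
        show ‖w‖ ≤ h ^ (-κ); rw [hwnorm]; exact key2
      have hdotw : Real.sqrt h * dotp w p = 4 * K1 * h * ‖p‖ := by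
        rw [hw, dotp_smul, dotp_self, hc]
        have e : 4 * K1 * Real.sqrt h / ‖p‖ * ‖p‖ ^ 2 = 4 * K1 * Real.sqrt h * ‖p‖ := by
          field_simp
        rw [e]
        calc Real.sqrt h * (4 * K1 * Real.sqrt h * ‖p‖)
            = 4 * K1 * (Real.sqrt h * Real.sqrt h) * ‖p‖ := by ring
          _ = 4 * K1 * h * ‖p‖ := by rw [hsq]
      have hquadw : -((h / 2) * quadForm Γ w) ≤ 2 * K1 * h * ‖p‖ := by
        have h1 := abs_quad_le Γ w
        have h2 : opN Γ * ‖w‖ ^ 2 ≤ K4 * h ^ (-δ) * ‖w‖ ^ 2 :=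
          mul_le_mul_of_nonneg_right hΓb (by positivity)
        have h3 : ‖w‖ ^ 2 = 16 * K1 ^ 2 * h := by
          rw [hwnorm]
          calc (4 * K1 * Real.sqrt h) ^ 2 = 16 * K1 ^ 2 * (Real.sqrt h * Real.sqrt h) := by
                ring
            _ = 16 * K1 ^ 2 * h := by rw [hsq]
        rw [h3] at h2
        have h4' : -quadForm Γ w ≤ K4 * h ^ (-δ) * (16 * K1 ^ 2 * h) := by
          have := (abs_le.mp h1).1
          rw [h3] at this
          linarith only [this, h2]
        have m1 : -((h / 2) * quadForm Γ w) ≤ h / 2 * (K4 * h ^ (-δ) * (16 * K1 ^ 2 * h)) := by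
          have := mul_le_mul_of_nonneg_left h4' (by positivity : (0:ℝ) ≤ h / 2)
          linarith only [this]
        have m2 : h / 2 * (K4 * h ^ (-δ) * (16 * K1 ^ 2 * h))
            = 2 * K1 * h * (4 * K1 * K4 * (h * h ^ (-δ))) := by ring
        rw [m2] at m1
        have m3 : 2 * K1 * h * (4 * K1 * K4 * (h * h ^ (-δ))) ≤ 2 * K1 * h * ‖p‖ :=
          mul_le_mul_of_nonneg_left hbig (by positivity)
        linarith only [m1, m3]
      refine ⟨w, hwX, ?_⟩
      have b1 : ψ (x + Real.sqrt h • w) ≤ B := hψB _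
      linarith only [b1, hquadw, hGmul, b4, hdotw.le, hdotw.ge, hexp, h8]
    · -- case C : ‖p‖ small; take w = 0
      refine ⟨0, hzero_mem, ?_⟩
      have b1 : ψ (x + Real.sqrt h • (0 : Ed d)) ≤ B := hψB _
      have b5 : 2 * K1 * h * ‖p‖ ≤ 8 * K1 ^ 2 * K4 * h := by
        have m1 : 2 * K1 * h * ‖p‖ ≤ 2 * K1 * h * (4 * K1 * K4 * (h * h ^ (-δ))) :=
          mul_le_mul_of_nonneg_left hsmall.le (by positivity)
        have m2 : 2 * K1 * h * (4 * K1 * K4 * (h * h ^ (-δ)))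
            = 8 * K1 ^ 2 * K4 * h * (h * h ^ (-δ)) := by ring
        rw [m2] at m1
        have m3 : 8 * K1 ^ 2 * K4 * h * (h * h ^ (-δ)) ≤ 8 * K1 ^ 2 * K4 * h * 1 :=
          mul_le_mul_of_nonneg_left h1δ (by positivity)
        linarith only [m1, m3]
      rw [dotp_zero', quad_zero']
      linarith only [b1, hGmul, b4, b5, hexp]
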